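/- arXiv:1605.02509 — 5 statements merged into one kernel-verified Lean document; each statement's English description precedes it below -/
import Mathlib

section
/- Let λ ∈ (0,1) and a > −2λ/(1+λ), and define h(t) = log( t^{a+1}·(1+λt)/(t+λ) ) for t ∈ (0,1]. Then h(t) → −∞ as t → 0⁺, h(1) = 0, and for every t ∈ (0,1]: h(t) ≤ 0 and the derivative h′(t) = (a+1)/t − 1/(t+λ) + λ/(1+λt) is strictly positive. -/
open Real Filter

theorem stmt7 (l a : ℝ) (hl : l ∈ Set.Ioo (0 : ℝ) 1) (ha : a > -2 * l / (1 + l))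
    (h : ℝ → ℝ) (hh : ∀ t, h t = Real.log (t ^ (a + 1) * (1 + l * t) / (t + l))) :
    Tendsto h (nhdsWithin 0 (Set.Ioi (0 : ℝ))) atBot ∧
    h 1 = 0 ∧
    ∀ t ∈ Set.Ioc (0 : ℝ) 1,
      h t ≤ 0 ∧
      HasDerivAt h ((a + 1) / t - 1 / (t + l) + l / (1 + l * t)) t ∧
      0 < (a + 1) / t - 1 / (t + l) + l / (1 + l * t) := by
  obtain ⟨hl0, hl1⟩ := hl
  have h1l : (0:ℝ) < 1 + l := by linarith
  have ha' : -2 * l < a * (1 + l) := by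
    rw [gt_iff_lt, div_lt_iff₀ h1l] at ha; linarith
  have ha1 : 0 < a + 1 := by nlinarith
  -- equality with the "split log" form on positive reals
  have hsplit : ∀ x : ℝ, 0 < x →
      h x = (a + 1) * Real.log x + Real.log (1 + l * x) - Real.log (x + l) := by
    intro x hx
    have h1 : 0 < 1 + l * x := by nlinarith
    have h2 : 0 < x + l := by linarith
    rw [hh x, Real.log_div (by positivity) h2.ne',
      Real.log_mul (by positivity) h1.ne', Real.log_rpow hx]
  -- derivative
  have key : ∀ t : ℝ, 0 < t →
      HasDerivAt h ((a + 1) / t - 1 / (t + l) + l / (1 + l * t)) t := by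
    intro t ht
    have h1 : 0 < 1 + l * t := by nlinarith
    have h2 : 0 < t + l := by linarith
    have d1 : HasDerivAt (fun x => (a+1) * Real.log x) ((a+1) * t⁻¹) t :=
      (Real.hasDerivAt_log ht.ne').const_mul _
    have d2 : HasDerivAt (fun x : ℝ => Real.log (1 + l*x)) ((1 + l*t)⁻¹ * l) t := by
      have hlin : HasDerivAt (fun x : ℝ => 1 + l*x) l t := by
        simpa using ((hasDerivAt_id t).const_mul l).const_add 1
      exact (Real.hasDerivAt_log h1.ne').comp t hlin
    have d3 : HasDerivAt (fun x : ℝ => Real.log (x + l)) ((t + l)⁻¹ * 1) t := by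
      have hlin : HasDerivAt (fun x : ℝ => x + l) 1 t := (hasDerivAt_id t).add_const l
      exact (Real.hasDerivAt_log h2.ne').comp t hlin
    have hg := (d1.add d2).sub d3
    have heq : h =ᶠ[nhds t]
        (fun x => (a+1) * Real.log x + Real.log (1 + l*x) - Real.log (x + l)) := by
      filter_upwards [Ioi_mem_nhds ht] with x hx
      exact hsplit x hx
    have := hg.congr_of_eventuallyEq heq
    convert this using 1
    · rfl
    · rfl
    · ring
  -- positivity of the derivative
  have hpos : ∀ t : ℝ, 0 < t → 0 < (a + 1) / t - 1 / (t + l) + l / (1 + l * t) := by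
    intro t ht
    have h1 : 0 < 1 + l * t := by nlinarith
    have h2 : 0 < t + l := by linarith
    have hca : 0 < (a+1)*(1+l) - (1-l) := by nlinarith
    have hnum : 0 < (a+1)*(t+l)*(1+l*t) - t*(1+l*t) + l*t*(t+l) := by
      nlinarith [mul_nonneg (mul_nonneg ha1.le hl0.le) (sq_nonneg (t-1)),
        mul_pos (mul_pos ht h1l) hca]
    have heq : (a + 1) / t - 1 / (t + l) + l / (1 + l * t) =
        ((a+1)*(t+l)*(1+l*t) - t*(1+l*t) + l*t*(t+l)) / (t*(t+l)*(1+l*t)) := by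
      field_simp
    rw [heq]
    exact div_pos hnum (by positivity)
  -- h 1 = 0
  have h1eq : h 1 = 0 := by
    rw [hh 1, Real.one_rpow]
    have : (1 : ℝ) * (1 + l * 1) / (1 + l) = 1 := by field_simp
    rw [this, Real.log_one]
  -- strict monotonicity on Ioc 0 1
  have hmono : StrictMonoOn h (Set.Ioc (0:ℝ) 1) := by
    apply strictMonoOn_of_deriv_pos (convex_Ioc 0 1)
    · intro x hx
      exact (key x hx.1).continuousAt.continuousWithinAt
    · intro x hx
      rw [interior_Ioc] at hx
      rw [(key x hx.1).deriv]
      exact hpos x hx.1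
  refine ⟨?_, h1eq, ?_⟩
  · -- tendsto atBot
    have heq : ∀ᶠ x in nhdsWithin 0 (Set.Ioi (0:ℝ)),
        h x = (a+1) * Real.log x + (Real.log (1 + l*x) - Real.log (x + l)) := by
      filter_upwards [self_mem_nhdsWithin] with x hx
      rw [hsplit x hx]; ring
    rw [tendsto_congr' heq]
    have t1 : Tendsto (fun x => (a+1) * Real.log x) (nhdsWithin 0 (Set.Ioi (0:ℝ))) atBot :=
      Real.tendsto_log_nhdsGT_zero.const_mul_atBot ha1
    have t2 : Tendsto (fun x : ℝ => Real.log (1 + l*x) - Real.log (x + l))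
        (nhdsWithin 0 (Set.Ioi (0:ℝ))) (nhds (Real.log (1 + l*0) - Real.log (0 + l))) := by
      apply Tendsto.mono_left _ nhdsWithin_le_nhds
      apply Tendsto.sub
      · exact (Real.continuousAt_log (by nlinarith)).tendsto.comp
          (by exact (continuous_const.add (continuous_const.mul continuous_id)).tendsto 0)
      · exact (Real.continuousAt_log (by simpa using hl0.ne')).tendsto.comp
          (by exact (continuous_id.add continuous_const).tendsto 0)
    exact tendsto_atBot_add_right_of_ge' _
      (Real.log (1 + l*0) - Real.log (0 + l) + 1) t1
      (t2.eventually_le_const (lt_add_one _))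
  · intro t ht
    refine ⟨?_, key t ht.1, hpos t ht.1⟩
    rcases eq_or_lt_of_le ht.2 with rfl | hlt
    · exact h1eq.le
    · have := hmono ht (Set.mem_Ioc.mpr ⟨one_pos, le_refl 1⟩) hlt
      linarith [h1eq ▸ this]
end

section
/- Let λ ∈ (0,1) and a = −2λ/(1+λ), and define h(t) = log( t^{a+1}·(1+λt)/(t+λ) ) for t ∈ (0,1]. Then for every t ∈ (0,1): h(t) < 0 and h′(t) = (a+1)/t − 1/(t+λ) + λ/(1+λt) > 0; moreover at t = 1: h′(1) = 0, the second derivative h″(1) = −(a+1) + 1/(1+λ)² − λ²/(1+λ)² equals 0, and the third derivative h‴(1) = 2(a+1) − 2/(1+λ)³ + 2λ³/(1+λ)³ equals 2λ(1−λ)/(1+λ)³. -/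
open Real

theorem stmt8 (l a : ℝ) (hl : l ∈ Set.Ioo (0 : ℝ) 1) (ha : a = -2 * l / (1 + l))
    (h : ℝ → ℝ) (hh : ∀ t, h t = Real.log (t ^ (a + 1) * (1 + l * t) / (t + l))) :
    (∀ t ∈ Set.Ioo (0 : ℝ) 1,
      h t < 0 ∧ 0 < (a + 1) / t - 1 / (t + l) + l / (1 + l * t)) ∧
    (a + 1) / 1 - 1 / (1 + l) + l / (1 + l * 1) = 0 ∧
    -(a + 1) + 1 / (1 + l) ^ 2 - l ^ 2 / (1 + l) ^ 2 = 0 ∧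
    2 * (a + 1) - 2 / (1 + l) ^ 3 + 2 * l ^ 3 / (1 + l) ^ 3
      = 2 * l * (1 - l) / (1 + l) ^ 3 := by
  obtain ⟨hl0, hl1⟩ := hl
  have h1l : (0:ℝ) < 1 + l := by linarith
  have h1l' : (1:ℝ) + l ≠ 0 := h1l.ne'
  -- positivity of the derivative expression
  have key : ∀ x : ℝ, 0 < x → x < 1 →
      0 < (a + 1) / x - 1 / (x + l) + l / (1 + l * x) := by
    intro x hx0 hx1
    have hxl : (0:ℝ) < x + l := by linarith
    have hlx : (0:ℝ) < 1 + l * x := by nlinarith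
    have e : (a + 1) / x - 1 / (x + l) + l / (1 + l * x)
        = l * (1 - l) * (x - 1) ^ 2 / ((1 + l) * (x * ((x + l) * (1 + l * x)))) := by
      subst ha
      field_simp
      ring
    rw [e]
    apply div_pos
    · have hx1' : (0:ℝ) < (x - 1) ^ 2 := by nlinarith
      have : (0:ℝ) < 1 - l := by linarith
      positivity
    · positivity
  -- auxiliary function
  set G : ℝ → ℝ := fun x => (a + 1) * Real.log x + Real.log (1 + l * x) - Real.log (x + l)
    with hG
  have HD : ∀ x : ℝ, 0 < x →
      HasDerivAt G ((a + 1) / x - 1 / (x + l) + l / (1 + l * x)) x := by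
    intro x hx0
    have hxl : (0:ℝ) < x + l := by linarith
    have hlx : (0:ℝ) < 1 + l * x := by nlinarith
    have d1 : HasDerivAt (fun y : ℝ => (a + 1) * Real.log y) ((a + 1) * x⁻¹) x :=
      (Real.hasDerivAt_log hx0.ne').const_mul (a + 1)
    have d2 : HasDerivAt (fun y : ℝ => Real.log (1 + l * y)) (l / (1 + l * x)) x := by
      have hlin : HasDerivAt (fun y : ℝ => 1 + l * y) l x := by
        simpa using ((hasDerivAt_id x).const_mul l).const_add 1
      simpa using hlin.log hlx.ne'
    have d3 : HasDerivAt (fun y : ℝ => Real.log (y + l)) (1 / (x + l)) x := by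
      have hlin : HasDerivAt (fun y : ℝ => y + l) 1 x := (hasDerivAt_id x).add_const l
      simpa using hlin.log hxl.ne'
    have := (d1.add d2).sub d3
    rw [show (a + 1) / x - 1 / (x + l) + l / (1 + l * x)
        = (a + 1) * x⁻¹ + l / (1 + l * x) - 1 / (x + l) by ring]
    exact this
  have hcont : ContinuousOn G (Set.Ioc 0 1) := fun x hx =>
    (HD x hx.1).continuousAt.continuousWithinAt
  have hmono : StrictMonoOn G (Set.Ioc 0 1) := by
    apply strictMonoOn_of_deriv_pos (convex_Ioc 0 1) hcont
    intro x hx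
    rw [interior_Ioc] at hx
    rw [(HD x hx.1).deriv]
    exact key x hx.1 hx.2
  have hG1 : G 1 = 0 := by
    simp [hG, mul_one, add_comm]
  constructor
  · intro t ht
    obtain ⟨ht0, ht1⟩ := ht
    refine ⟨?_, key t ht0 ht1⟩
    have hxl : (0:ℝ) < t + l := by linarith
    have hlx : (0:ℝ) < 1 + l * t := by nlinarith
    have htG : h t = G t := by
      rw [hh, hG]
      rw [Real.log_div (by positivity) hxl.ne', Real.log_mul (by positivity) hlx.ne',
        Real.log_rpow ht0]
    have : G t < G 1 := hmono ⟨ht0, ht1.le⟩ (by constructor <;> norm_num) ht1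
    rw [htG, ← hG1] at *
    linarith
  · refine ⟨?_, ?_, ?_⟩ <;> (subst ha; field_simp; ring)
end

section
/- Let λ ∈ (0,1) and a ∈ (−1, −2λ/(1+λ)), and define h(t) = log( t^{a+1}·(1+λt)/(t+λ) ) for t ∈ (0,1]. Set y = (a + aλ² + 2λ²)/(2λ(a+1)) and t₋ = −y − √(y² − 1). Then t₋ ∈ (0,1), h′(t₋) = 0, h″(t₋) = (λ/t₋)·( −1/(λ+t₋)² + 1/(1+λt₋)² ) < 0, h(t₋) > 0, and h attains its unique global maximum on (0,1] at t₋ (i.e. h(t) < h(t₋) for all t ∈ (0,1] with t ≠ t₋). -/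
open Real

set_option maxHeartbeats 1000000 in
theorem stmt9 (l a : ℝ) (hl : l ∈ Set.Ioo (0 : ℝ) 1)
    (ha : a ∈ Set.Ioo (-1 : ℝ) (-2 * l / (1 + l)))
    (h : ℝ → ℝ) (hh : ∀ t, h t = Real.log (t ^ (a + 1) * (1 + l * t) / (t + l)))
    (y tm : ℝ) (hy : y = (a + a * l ^ 2 + 2 * l ^ 2) / (2 * l * (a + 1)))
    (htm : tm = -y - Real.sqrt (y ^ 2 - 1)) :
    tm ∈ Set.Ioo (0 : ℝ) 1 ∧
    (a + 1) / tm - 1 / (tm + l) + l / (1 + l * tm) = 0 ∧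
    -(a + 1) / tm ^ 2 + 1 / (tm + l) ^ 2 - l ^ 2 / (1 + l * tm) ^ 2
      = (l / tm) * (-(1 / (l + tm) ^ 2) + 1 / (1 + l * tm) ^ 2) ∧
    (l / tm) * (-(1 / (l + tm) ^ 2) + 1 / (1 + l * tm) ^ 2) < 0 ∧
    0 < h tm ∧
    ∀ t ∈ Set.Ioc (0 : ℝ) 1, t ≠ tm → h t < h tm := by
  obtain ⟨hl0, hl1⟩ := hl
  obtain ⟨ha1, ha2⟩ := ha
  have hap : (0:ℝ) < a + 1 := by linarith
  have hden : (0:ℝ) < 2 * l * (a + 1) := by positivity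
  have ha2' : a * (1 + l) + 2 * l < 0 := by
    have h1 : (0:ℝ) < 1 + l := by linarith
    have := (lt_div_iff₀ h1).mp ha2
    linarith
  have hyd : y * (2 * l * (a + 1)) = a + a * l ^ 2 + 2 * l ^ 2 := by
    rw [hy]; field_simp
  have hym1 : y < -1 := by
    rw [hy]
    rw [div_lt_iff₀ hden]
    nlinarith
  have hy2 : 1 < y ^ 2 := by nlinarith
  set s := Real.sqrt (y ^ 2 - 1) with hs
  have hs2 : s ^ 2 = y ^ 2 - 1 := Real.sq_sqrt (by linarith)
  have hspos : 0 < s := Real.sqrt_pos.mpr (by linarith)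
  have hslt : s < -y := by nlinarith
  have htm0 : 0 < tm := by rw [htm]; linarith
  have htm1 : tm < 1 := by
    have : -y - 1 < s := by nlinarith
    rw [htm]; linarith
  have hq : tm ^ 2 + 2 * y * tm + 1 = 0 := by
    rw [htm]; nlinarith
  -- key polynomial relation
  have rel : (a + 1) * ((tm + l) * (1 + l * tm)) = tm * (1 + l * tm) - l * tm * (tm + l) := by
    linear_combination ((a + 1) * l) * hq - tm * hyd
  have htl : (0:ℝ) < tm + l := by linarith
  have hltm : (0:ℝ) < 1 + l * tm := by nlinarith
  have claim2 : (a + 1) / tm - 1 / (tm + l) + l / (1 + l * tm) = 0 := by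
    field_simp
    linear_combination rel
  have claim3 : -(a + 1) / tm ^ 2 + 1 / (tm + l) ^ 2 - l ^ 2 / (1 + l * tm) ^ 2
      = (l / tm) * (-(1 / (l + tm) ^ 2) + 1 / (1 + l * tm) ^ 2) := by
    rw [← sub_eq_zero]
    have expand : (-(a + 1) / tm ^ 2 + 1 / (tm + l) ^ 2 - l ^ 2 / (1 + l * tm) ^ 2)
        - ((l / tm) * (-(1 / (l + tm) ^ 2) + 1 / (1 + l * tm) ^ 2))
        = (-(tm + l) * (1 + l * tm) *
            ((a + 1) * ((tm + l) * (1 + l * tm)) - (tm * (1 + l * tm) - l * tm * (tm + l))))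
          / (tm ^ 2 * (tm + l) ^ 2 * (1 + l * tm) ^ 2) := by
      rw [add_comm l tm]
      field_simp
      ring
    rw [expand, rel, sub_self, mul_zero, zero_div]
  have hlt1 : l + tm < 1 + l * tm := by
    nlinarith [mul_pos (by linarith : (0:ℝ) < 1 - l) (by linarith : (0:ℝ) < 1 - tm)]
  have claim4 : (l / tm) * (-(1 / (l + tm) ^ 2) + 1 / (1 + l * tm) ^ 2) < 0 := by
    have hsq : (l + tm) ^ 2 < (1 + l * tm) ^ 2 :=
      pow_lt_pow_left₀ hlt1 (by positivity) two_ne_zero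
    have : 1 / (1 + l * tm) ^ 2 < 1 / (l + tm) ^ 2 :=
      one_div_lt_one_div_of_lt (by positivity) hsq
    apply mul_neg_of_pos_of_neg (by positivity)
    linarith
  -- rewrite h as sum of logs
  set g : ℝ → ℝ := fun t => (a + 1) * Real.log t + Real.log (1 + l * t) - Real.log (t + l)
    with hg
  have hhg : ∀ t : ℝ, 0 < t → h t = g t := by
    intro t ht
    have h1 : (0:ℝ) < 1 + l * t := by nlinarith
    have h2 : (0:ℝ) < t + l := by linarith
    have h3 : (0:ℝ) < t ^ (a + 1) := Real.rpow_pos_of_pos ht _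
    rw [hh, hg]
    rw [Real.log_div (by positivity) h2.ne', Real.log_mul h3.ne' h1.ne',
      Real.log_rpow ht]
  -- derivative of g
  have hderiv : ∀ t : ℝ, 0 < t →
      HasDerivAt g ((a + 1) / t + l / (1 + l * t) - 1 / (t + l)) t := by
    intro t ht
    have h1 : (1 + l * t) ≠ 0 := by nlinarith
    have h2 : (t + l) ≠ 0 := by nlinarith
    have A := (Real.hasDerivAt_log ht.ne').const_mul (a + 1)
    have B : HasDerivAt (fun x : ℝ => Real.log (1 + l * x)) ((l * 1) / (1 + l * t)) t := by
      exact (((hasDerivAt_id t).const_mul l).const_add 1).log h1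
    have C : HasDerivAt (fun x : ℝ => Real.log (x + l)) (1 / (t + l)) t :=
      ((hasDerivAt_id t).add_const l).log h2
    have := (A.add B).sub C
    exact this.congr_deriv (by ring)
  -- factorization of the derivative
  have hDfac : ∀ t : ℝ, 0 < t →
      (a + 1) / t + l / (1 + l * t) - 1 / (t + l)
        = (a + 1) * l * (t ^ 2 + 2 * y * t + 1) / (t * (t + l) * (1 + l * t)) := by
    intro t ht
    have h1 : (0:ℝ) < 1 + l * t := by nlinarith
    have h2 : (0:ℝ) < t + l := by linarith
    field_simp
    linear_combination (-t) * hyd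
  have hQ : ∀ t : ℝ, (t ^ 2 + 2 * y * t + 1) * tm = (t - tm) * (t * tm - 1) := by
    intro t
    linear_combination t * hq
  have hQpos : ∀ t : ℝ, 0 < t → t < tm → 0 < t ^ 2 + 2 * y * t + 1 := by
    intro t ht0 httm
    have h1 : t * tm < 1 := by nlinarith [mul_pos ht0 (by linarith : (0:ℝ) < 1 - tm)]
    nlinarith [hQ t, mul_pos (by linarith : (0:ℝ) < tm - t) (by linarith : (0:ℝ) < 1 - t * tm)]
  have hQneg : ∀ t : ℝ, tm < t → t < 1 → t ^ 2 + 2 * y * t + 1 < 0 := by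
    intro t httm ht1
    have ht0 : 0 < t := lt_trans htm0 httm
    have h1 : t * tm < 1 := by nlinarith [mul_pos ht0 (by linarith : (0:ℝ) < 1 - tm)]
    nlinarith [hQ t, mul_pos (by linarith : (0:ℝ) < t - tm) (by linarith : (0:ℝ) < 1 - t * tm)]
  -- monotonicity
  have hmono : StrictMonoOn g (Set.Ioc 0 tm) := by
    apply strictMonoOn_of_deriv_pos (convex_Ioc 0 tm)
    · intro t ht
      exact (hderiv t ht.1).continuousAt.continuousWithinAt
    · intro t ht
      rw [interior_Ioc] at ht
      obtain ⟨ht0, httm⟩ := ht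
      rw [(hderiv t ht0).deriv, hDfac t ht0]
      have h1 : (0:ℝ) < 1 + l * t := by positivity
      have h2 : (0:ℝ) < t + l := by linarith
      exact div_pos (mul_pos (mul_pos hap hl0) (hQpos t ht0 httm))
        (mul_pos (mul_pos ht0 h2) h1)
  have hanti : StrictAntiOn g (Set.Icc tm 1) := by
    apply strictAntiOn_of_deriv_neg (convex_Icc tm 1)
    · intro t ht
      exact (hderiv t (lt_of_lt_of_le htm0 ht.1)).continuousAt.continuousWithinAt
    · intro t ht
      rw [interior_Icc] at ht
      obtain ⟨httm, ht1⟩ := ht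
      have ht0 : 0 < t := lt_trans htm0 httm
      rw [(hderiv t ht0).deriv, hDfac t ht0]
      have h1 : (0:ℝ) < 1 + l * t := by positivity
      have h2 : (0:ℝ) < t + l := by linarith
      exact div_neg_of_neg_of_pos
        (mul_neg_of_pos_of_neg (mul_pos hap hl0) (hQneg t httm ht1))
        (mul_pos (mul_pos ht0 h2) h1)
  have claim6 : ∀ t ∈ Set.Ioc (0 : ℝ) 1, t ≠ tm → h t < h tm := by
    intro t ht hne
    rw [hhg t ht.1, hhg tm htm0]
    rcases lt_or_gt_of_ne hne with hlt | hgt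
    · exact hmono ⟨ht.1, hlt.le⟩ ⟨htm0, le_refl tm⟩ hlt
    · exact hanti ⟨le_refl tm, htm1.le⟩ ⟨hgt.le, ht.2⟩ hgt
  have claim5 : 0 < h tm := by
    have h1 : h 1 = 0 := by
      rw [hh]
      have e : (1:ℝ) ^ (a + 1) * (1 + l * 1) / (1 + l) = 1 := by
        rw [Real.one_rpow]
        field_simp
      rw [e, Real.log_one]
    have := claim6 1 ⟨one_pos, le_refl 1⟩ (by linarith : (1:ℝ) ≠ tm)
    linarith
  exact ⟨⟨htm0, htm1⟩, claim2, claim3, claim4, claim5, claim6⟩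
end

section
/- Let λ ∈ (0,1), a > −2λ/(1+λ), and α, β > −1. Then there is a constant C > 0 such that for every positive integer n, | ∫_0^1 (1+λt)^{β}·t^{α}·(t+λ)^{−1}·( t^{a+1}·(1+λt)/(t+λ) )^{n} dt − (1/n)·(1+λ)^{β}/(λ(a+2)+a) | ≤ C·n^{−2}. -/
open Real MeasureTheory Set

private lemma exp_diff_le {x y : ℝ} (h : y ≤ x) : exp x - exp y ≤ exp x * (x - y) := by
  have h1 : 1 - (x - y) ≤ exp (y - x) := by linarith [add_one_le_exp (y - x)]
  have h2 : exp y = exp x * exp (y - x) := by rw [← exp_add]; ring_nf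
  nlinarith [exp_pos x, exp_pos (y-x)]

private lemma sq_le_four_exp {u : ℝ} (hu : 0 ≤ u) : u ^ 2 ≤ 4 * exp u := by
  have h1 : u / 2 + 1 ≤ exp (u / 2) := add_one_le_exp _
  have h2 : exp u = exp (u / 2) * exp (u / 2) := by rw [← exp_add]; ring_nf
  nlinarith [exp_pos (u/2)]

private lemma exp_neg_le {x : ℝ} (hx : 0 < x) : exp (-x) ≤ 4 / x ^ 2 := by
  have h := sq_le_four_exp hx.le
  rw [le_div_iff₀ (by positivity)]
  have h2 : exp (-x) * exp x = 1 := by rw [← exp_add]; simp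
  nlinarith [exp_pos x, exp_pos (-x)]

private lemma lin_exp_le {lam x : ℝ} (hl : 0 < lam) (hx : 0 ≤ x) :
    x * exp (-(lam * x)) ≤ (2 / lam) * exp (-(lam * x / 2)) := by
  have h1 : lam * x / 2 ≤ exp (lam * x / 2) := by
    linarith [add_one_le_exp (lam * x / 2), mul_nonneg hl.le hx]
  have h2 : exp (-(lam * x)) * exp (lam * x / 2) = exp (-(lam * x / 2)) := by
    rw [← exp_add]; ring_nf
  have h3 : x * exp (-(lam*x)) = (1/lam) * (lam * x) * exp (-(lam*x)) := by
    field_simp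
  rw [h3]
  have h4 : (lam * x) * exp (-(lam*x)) ≤ 2 * exp (-(lam * x / 2)) := by
    calc (lam * x) * exp (-(lam*x)) ≤ (2 * exp (lam*x/2)) * exp (-(lam*x)) := by
          apply mul_le_mul_of_nonneg_right (by linarith) (exp_pos _).le
      _ = 2 * exp (-(lam * x / 2)) := by rw [mul_assoc, mul_comm (exp _), h2]
  calc (1/lam) * (lam * x) * exp (-(lam*x)) = (1/lam) * ((lam * x) * exp (-(lam*x))) := by ring
    _ ≤ (1/lam) * (2 * exp (-(lam * x / 2))) := by
        apply mul_le_mul_of_nonneg_left h4 (by positivity)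
    _ = (2/lam) * exp (-(lam * x / 2)) := by ring

private lemma sq_exp_le {lam x : ℝ} (hl : 0 < lam) (hx : 0 ≤ x) :
    x ^ 2 * exp (-(lam * x)) ≤ (16 / lam ^ 2) * exp (-(lam * x / 2)) := by
  have h1 : (lam * x / 2) ^ 2 ≤ 4 * exp (lam * x / 2) := sq_le_four_exp (by positivity)
  have h2 : exp (-(lam * x)) * exp (lam * x / 2) = exp (-(lam * x / 2)) := by
    rw [← exp_add]; ring_nf
  have h3 : (lam * x) ^ 2 * exp (-(lam*x)) ≤ 16 * exp (-(lam * x / 2)) := by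
    calc (lam * x) ^ 2 * exp (-(lam*x)) = 4 * ((lam*x/2)^2) * exp (-(lam*x)) := by ring
      _ ≤ 4 * (4 * exp (lam*x/2)) * exp (-(lam*x)) := by
          apply mul_le_mul_of_nonneg_right _ (exp_pos _).le
          · apply mul_le_mul_of_nonneg_left h1 (by norm_num)
      _ = 16 * (exp (-(lam*x)) * exp (lam*x/2)) := by ring
      _ = 16 * exp (-(lam * x / 2)) := by rw [h2]
  have h4 : x ^ 2 * exp (-(lam*x)) = (1/lam^2) * ((lam*x)^2 * exp (-(lam*x))) := by
    field_simp
  rw [h4]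
  calc (1/lam^2) * ((lam*x)^2 * exp (-(lam*x))) ≤ (1/lam^2) * (16 * exp (-(lam*x/2))) := by
        apply mul_le_mul_of_nonneg_left h3 (by positivity)
    _ = (16 / lam^2) * exp (-(lam * x / 2)) := by ring

private lemma log_lower {x : ℝ} (h1 : 1/2 ≤ x) (h2 : x ≤ 1) :
    (x - 1) - log x ≤ 2 * (1 - x) ^ 2 := by
  have hx : 0 < x := by linarith
  have h3 : log x⁻¹ ≤ x⁻¹ - 1 := log_le_sub_one_of_pos (by positivity)
  rw [log_inv] at h3
  have h4 : (x - 1) - log x ≤ (x - 1) + (x⁻¹ - 1) := by linarith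
  have h5 : (x - 1) + (x⁻¹ - 1) = (x-1)^2 / x := by field_simp; ring
  rw [h5] at h4
  have h6 : (x-1)^2 / x ≤ 2 * (1-x)^2 := by
    rw [div_le_iff₀ hx]; nlinarith [sq_nonneg (1-x)]
  linarith

private lemma log_upper {x : ℝ} (hx : 0 < x) : 0 ≤ (x - 1) - log x := by
  linarith [log_le_sub_one_of_pos hx]

private lemma exp_integral {lam p q : ℝ} (hlam : 0 < lam) (hpq : p ≤ q) :
    ∫ t in Ioo p q, exp (lam * (t - 1)) = (exp (lam * (q - 1)) - exp (lam * (p - 1))) / lam := by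
  rw [← integral_Ioc_eq_integral_Ioo, ← intervalIntegral.integral_of_le hpq]
  have h : ∀ x ∈ uIcc p q, HasDerivAt (fun t => exp (lam * (t - 1)) / lam) (exp (lam * (x - 1))) x := by
    intro x _
    have h1 : HasDerivAt (fun t : ℝ => lam * (t - 1)) lam x := by
      simpa using ((hasDerivAt_id x).sub_const 1).const_mul lam
    have h2 := ((Real.hasDerivAt_exp (lam * (x - 1))).comp x h1).div_const lam
    simpa [mul_comm, mul_div_assoc, mul_div_cancel_left₀ _ hlam.ne'] using h2
  rw [intervalIntegral.integral_eq_sub_of_hasDerivAt h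
    ((Continuous.intervalIntegrable (by continuity) _ _))]
  ring


private lemma key1 {l : ℝ} (hl0 : 0 < l) (hl1 : l < 1) {t : ℝ} (ht0 : 0 < t) (ht1 : t < 1) :
    t ^ ((1 - l) / (1 + l)) * (1 + l * t) ≤ t + l := by
  set m : ℝ := (1 - l) / (1 + l) with hm
  have h1l : (0:ℝ) < 1 + l := by linarith
  have hm0 : 0 < m := div_pos (by linarith) h1l
  -- the auxiliary function u
  set u : ℝ → ℝ := fun x => log (x + l) - log (1 + l * x) - m * log x with hu
  have hderiv : ∀ x ∈ Ioo t 1, HasDerivAt u ((x + l)⁻¹ - l * (1 + l * x)⁻¹ - m * x⁻¹) x := by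
    intro x hx
    have hx0 : 0 < x := lt_trans ht0 hx.1
    have hA : (0:ℝ) < x + l := by linarith
    have hB : (0:ℝ) < 1 + l * x := by nlinarith
    have d1 : HasDerivAt (fun x : ℝ => log (x + l)) ((x + l)⁻¹) x := by
      have := (Real.hasDerivAt_log hA.ne').comp x ((hasDerivAt_id x).add_const l)
      simpa [Function.comp_def] using this
    have d2 : HasDerivAt (fun x : ℝ => log (1 + l * x)) (l * (1 + l * x)⁻¹) x := by
      have hi : HasDerivAt (fun x : ℝ => 1 + l * x) l x := by
        simpa using ((hasDerivAt_id x).const_mul l).const_add 1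
      have := (Real.hasDerivAt_log hB.ne').comp x hi
      simpa [mul_comm, Function.comp_def] using this
    have d3 : HasDerivAt (fun x : ℝ => m * log x) (m * x⁻¹) x := by
      simpa using (Real.hasDerivAt_log hx0.ne').const_mul m
    exact (d1.sub d2).sub d3
  have hanti : StrictAntiOn u (Icc t 1) := by
    apply strictAntiOn_of_deriv_neg (convex_Icc t 1)
    · apply ContinuousOn.sub
      apply ContinuousOn.sub
      · apply ContinuousOn.log (by fun_prop)
        intro x hx; have : (0:ℝ) < x + l := by have := hx.1; linarith
        exact this.ne'
      · apply ContinuousOn.log (by fun_prop)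
        intro x hx
        have hx0 : 0 < x := lt_of_lt_of_le ht0 hx.1
        have : (0:ℝ) < 1 + l * x := by nlinarith
        exact this.ne'
      · apply ContinuousOn.mul continuousOn_const
        apply ContinuousOn.log (by fun_prop)
        intro x hx; exact (lt_of_lt_of_le ht0 hx.1).ne'
    · intro x hx
      rw [interior_Icc] at hx
      rw [(hderiv x hx).deriv]
      have hx0 : 0 < x := lt_trans ht0 hx.1
      have hx1 : x < 1 := hx.2
      have hA : (0:ℝ) < x + l := by linarith
      have hB : (0:ℝ) < 1 + l * x := by nlinarith
      have e1 : (x + l)⁻¹ - l * (1 + l * x)⁻¹ = (1 - l^2) / ((x + l) * (1 + l * x)) := by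
        field_simp; ring
      have e2 : m * x⁻¹ = (1 - l) / ((1 + l) * x) := by rw [hm]; field_simp
      rw [e1, sub_neg, e2]
      rw [div_lt_div_iff₀ (by positivity) (by positivity)]
      have hsq : 0 < (1 - x)^2 := by nlinarith
      nlinarith [mul_pos hl0 hsq]
  have hu1 : u 1 = 0 := by simp [hu]
  have hut : 0 < u t := by
    have := hanti (left_mem_Icc.mpr ht1.le) (right_mem_Icc.mpr ht1.le) ht1
    rw [hu1] at this; linarith
  -- conclude
  have hA : (0:ℝ) < t + l := by linarith
  have hB : (0:ℝ) < 1 + l * t := by nlinarith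
  have hlog : m * log t + log (1 + l * t) ≤ log (t + l) := by
    simp only [hu] at hut; linarith
  calc t ^ m * (1 + l * t) = exp (m * log t) * exp (log (1 + l * t)) := by
        rw [rpow_def_of_pos ht0, exp_log hB]; ring_nf
    _ = exp (m * log t + log (1 + l * t)) := by rw [← exp_add]
    _ ≤ exp (log (t + l)) := exp_le_exp.mpr hlog
    _ = t + l := exp_log hA

private lemma fexp {l a t : ℝ} (hl0 : 0 < l) (ht0 : 0 < t) :
    t ^ (a + 1) * (1 + l * t) / (t + l)
      = exp ((a + 1) * log t + log (1 + l * t) - log (t + l)) := by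
  have hA : (0:ℝ) < t + l := by linarith
  have hB : (0:ℝ) < 1 + l * t := by nlinarith
  rw [rpow_def_of_pos ht0, exp_sub, exp_add, exp_log hA, exp_log hB, mul_comm (log t) (a+1)]

private lemma key2 {l a t : ℝ} (hl0 : 0 < l) (hl1 : l < 1)
    (hca : (1 - l) / (1 + l) ≤ a + 1) (ht0 : 0 < t) (ht1 : t < 1) :
    (a + 1) * log t + log (1 + l * t) - log (t + l)
      ≤ (a + 1 - (1 - l) / (1 + l)) * (t - 1) := by
  set m : ℝ := (1 - l) / (1 + l) with hm
  have h1l : (0:ℝ) < 1 + l := by linarith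
  have hA : (0:ℝ) < t + l := by linarith
  have hB : (0:ℝ) < 1 + l * t := by nlinarith
  have h1 := key1 hl0 hl1 ht0 ht1
  have h2 : m * log t + log (1 + l * t) ≤ log (t + l) := by
    have := log_le_log (by positivity) h1
    rwa [log_mul (by positivity) hB.ne', log_rpow ht0] at this
  have h3 : log t ≤ t - 1 := by linarith [log_le_sub_one_of_pos ht0]
  have h4 : (a + 1 - m) * log t ≤ (a + 1 - m) * (t - 1) :=
    mul_le_mul_of_nonneg_left h3 (by linarith)
  nlinarith

private lemma key3 {l a t : ℝ} (hl0 : 0 < l) (hl1 : l < 1) (ha1 : 0 ≤ a + 1)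
    (ht0 : 1/2 ≤ t) (ht1 : t ≤ 1) :
    (a + 1 - (1 - l) / (1 + l)) * (t - 1)
        - ((a + 1) * log t + log (1 + l * t) - log (t + l))
      ≤ (2 * (a + 1) + 2) * (1 - t) ^ 2 := by
  have h1l : (0:ℝ) < 1 + l := by linarith
  have ht0' : (0:ℝ) < t := by linarith
  have hA : (0:ℝ) < t + l := by linarith
  have hB : (0:ℝ) < 1 + l * t := by nlinarith
  set x2 : ℝ := (1 + l * t) / (1 + l) with hx2
  set x3 : ℝ := (t + l) / (1 + l) with hx3
  have hx2l : 1/2 ≤ x2 := by rw [hx2, le_div_iff₀ h1l]; nlinarith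
  have hx2u : x2 ≤ 1 := by rw [hx2, div_le_one h1l]; nlinarith
  have hx3l : 1/2 ≤ x3 := by rw [hx3, le_div_iff₀ h1l]; nlinarith
  have hx3u : x3 ≤ 1 := by rw [hx3, div_le_one h1l]; nlinarith
  have e2 : log x2 = log (1 + l * t) - log (1 + l) := log_div hB.ne' h1l.ne'
  have e3 : log x3 = log (t + l) - log (1 + l) := log_div hA.ne' h1l.ne'
  -- decomposition identity
  have hid : (a + 1 - (1 - l) / (1 + l)) * (t - 1)
        - ((a + 1) * log t + log (1 + l * t) - log (t + l))
      = (a + 1) * ((t - 1) - log t) + ((x2 - 1) - log x2) - ((x3 - 1) - log x3) := by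
    rw [e2, e3, hx2, hx3]; field_simp; ring
  rw [hid]
  have b1 : (t - 1) - log t ≤ 2 * (1 - t) ^ 2 := log_lower ht0 ht1
  have b1' : 0 ≤ (t - 1) - log t := log_upper ht0'
  have b2 : (x2 - 1) - log x2 ≤ 2 * (1 - x2) ^ 2 := log_lower hx2l hx2u
  have b3 : 0 ≤ (x3 - 1) - log x3 := log_upper (by linarith)
  have hx2t : (1 - x2) ^ 2 ≤ (1 - t) ^ 2 := by
    have h1 : 1 - x2 = l * (1 - t) / (1 + l) := by rw [hx2]; field_simp; ring
    have h2 : 0 ≤ 1 - x2 := by linarith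
    have h3 : 1 - x2 ≤ 1 - t := by
      rw [h1, div_le_iff₀ h1l]; nlinarith
    nlinarith
  nlinarith [mul_le_mul_of_nonneg_left b1 ha1]

private lemma gLip {l : ℝ} (α β : ℝ) (hl0 : 0 < l) :
    ∃ L, 0 ≤ L ∧ ∀ t ∈ Icc (1/2:ℝ) 1,
      |(1 + l * t) ^ β * t ^ α / (t + l) - (1 + l) ^ β * 1 ^ α / (1 + l)| ≤ L * (1 - t) := by
  set s : Set ℝ := Icc (1/2:ℝ) 1 with hs
  set g : ℝ → ℝ := fun t => (1 + l * t) ^ β * t ^ α / (t + l) with hg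
  set G' : ℝ → ℝ := fun t =>
      ((l * β * (1 + l * t) ^ (β - 1) * t ^ α + (1 + l * t) ^ β * (α * t ^ (α - 1))) * (t + l)
        - (1 + l * t) ^ β * t ^ α * 1) / (t + l) ^ 2 with hG'
  have hd : ∀ t ∈ s, HasDerivAt g (G' t) t := by
    intro t ht
    have ht0 : (0:ℝ) < t := lt_of_lt_of_le (by norm_num) ht.1
    have hA : (0:ℝ) < t + l := by linarith
    have hB : (0:ℝ) < 1 + l * t := by nlinarith
    have h1 : HasDerivAt (fun t : ℝ => 1 + l * t) l t := by
      simpa using ((hasDerivAt_id t).const_mul l).const_add 1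
    have hp := h1.rpow_const (p := β) (Or.inl hB.ne')
    have hq : HasDerivAt (fun t : ℝ => t ^ α) (α * t ^ (α - 1)) t :=
      Real.hasDerivAt_rpow_const (Or.inl ht0.ne')
    have hden : HasDerivAt (fun t : ℝ => t + l) 1 t := (hasDerivAt_id t).add_const l
    exact (hp.mul hq).div hden hA.ne'
  have hcont : ContinuousOn G' s := by
    have hpos : ∀ x ∈ s, (0:ℝ) < x := fun x hx => lt_of_lt_of_le (by norm_num) hx.1
    have hBpos : ∀ x ∈ s, (0:ℝ) < 1 + l * x := by
      intro x hx; nlinarith [hpos x hx]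
    have hApos : ∀ x ∈ s, (0:ℝ) < x + l := by intro x hx; linarith [hpos x hx]
    have hb1 : ContinuousOn (fun t : ℝ => 1 + l * t) s := by fun_prop
    have c1 : ContinuousOn (fun t : ℝ => (1 + l * t) ^ (β - 1)) s :=
      hb1.rpow_const fun x hx => Or.inl (hBpos x hx).ne'
    have c3 : ContinuousOn (fun t : ℝ => (1 + l * t) ^ β) s :=
      hb1.rpow_const fun x hx => Or.inl (hBpos x hx).ne'
    have c2 : ContinuousOn (fun t : ℝ => t ^ α) s :=
      continuousOn_id.rpow_const fun x hx => Or.inl (hpos x hx).ne'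
    have c4 : ContinuousOn (fun t : ℝ => t ^ (α - 1)) s :=
      continuousOn_id.rpow_const fun x hx => Or.inl (hpos x hx).ne'
    apply ContinuousOn.div
    · exact ((((continuousOn_const.mul c1).mul c2).add
        (c3.mul (continuousOn_const.mul c4))).mul (by fun_prop)).sub
        ((c3.mul c2).mul continuousOn_const)
    · fun_prop
    · intro x hx; exact pow_ne_zero 2 (hApos x hx).ne'
  obtain ⟨L, hL⟩ := isCompact_Icc.exists_bound_of_continuousOn hcont
  have hL0 : 0 ≤ L := le_trans (norm_nonneg _) (hL 1 (by norm_num [hs]))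
  refine ⟨L, hL0, fun t ht => ?_⟩
  have h1s : (1:ℝ) ∈ s := by norm_num [hs]
  have := (convex_Icc (1/2:ℝ) 1).norm_image_sub_le_of_norm_hasDerivWithin_le
    (fun x hx => (hd x hx).hasDerivWithinAt) hL h1s ht
  have hval : g 1 = (1 + l) ^ β * 1 ^ α / (1 + l) := by norm_num [hg]
  have habs : ‖t - (1:ℝ)‖ = 1 - t := by
    rw [Real.norm_eq_abs, abs_of_nonpos (by linarith [ht.2])]; ring
  calc |(1 + l * t) ^ β * t ^ α / (t + l) - (1 + l) ^ β * 1 ^ α / (1 + l)|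
      = ‖g t - g 1‖ := by rw [hval, Real.norm_eq_abs]
    _ ≤ L * ‖t - 1‖ := this
    _ = L * (1 - t) := by rw [habs]

set_option maxHeartbeats 1000000 in
theorem stmt10 (l a α β : ℝ) (hl : l ∈ Set.Ioo (0 : ℝ) 1) (ha : a > -2 * l / (1 + l))
    (hα : α > -1) (hβ : β > -1) :
    ∃ C > 0, ∀ n : ℕ, 0 < n →
      |(∫ t in Set.Ioo (0 : ℝ) 1,
            (1 + l * t) ^ β * t ^ α / (t + l) * (t ^ (a + 1) * (1 + l * t) / (t + l)) ^ n)
          - (1 / n) * (1 + l) ^ β / (l * (a + 2) + a)|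
        ≤ C * (n : ℝ) ^ (-(2 : ℝ)) := by
  obtain ⟨hl0, hl1⟩ := hl
  have h1l : (0:ℝ) < 1 + l := by linarith
  set m : ℝ := (1 - l) / (1 + l) with hm
  have hm0 : 0 < m := div_pos (by linarith) h1l
  set c : ℝ := a + 1 - m with hc
  have hc0 : 0 < c := by
    have ha' : -2 * l / (1 + l) < a := ha
    have h2 : -2 * l < a * (1 + l) := by rwa [div_lt_iff₀ h1l] at ha'
    rw [hc, hm, sub_pos, div_lt_iff₀ h1l]; nlinarith
  have ha1 : 0 < a + 1 := by linarith
  set g1 : ℝ := (1 + l) ^ β / (1 + l) with hg1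
  have hg10 : 0 < g1 := div_pos (rpow_pos_of_pos h1l β) h1l
  set K : ℝ := g1 / c with hK
  have hK0 : 0 < K := div_pos hg10 hc0
  obtain ⟨L, hL0, hLip⟩ := gLip (l := l) α β hl0
  set B : ℝ := 2 * (a + 1) + 2 with hB
  have hB0 : 0 < B := by linarith
  set g : ℝ → ℝ := fun t => (1 + l * t) ^ β * t ^ α / (t + l) with hg
  set f : ℝ → ℝ := fun t => t ^ (a + 1) * (1 + l * t) / (t + l) with hf
  -- pointwise facts on (0,1)
  have hpt : ∀ t ∈ Ioo (0:ℝ) 1, 0 < t + l ∧ 0 < 1 + l * t := by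
    intro t ht; constructor
    · linarith [ht.1]
    · nlinarith [ht.1, ht.2]
  have hgpos : ∀ t ∈ Ioo (0:ℝ) 1, 0 ≤ g t := by
    intro t ht
    have := (hpt t ht).1
    have h2 := rpow_nonneg (by nlinarith [ht.1] : (0:ℝ) ≤ 1 + l * t) β
    have h3 := rpow_nonneg ht.1.le α
    rw [hg]; positivity
  have hφ : ∀ t ∈ Ioo (0:ℝ) 1,
      (a + 1) * log t + log (1 + l * t) - log (t + l) ≤ c * (t - 1) := by
    intro t ht
    have := key2 (a := a) hl0 hl1 (by rw [← hm]; linarith) ht.1 ht.2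
    rw [← hm, ← hc] at this; exact this
  have hfexp : ∀ t ∈ Ioo (0:ℝ) 1,
      f t = exp ((a + 1) * log t + log (1 + l * t) - log (t + l)) := by
    intro t ht; exact fexp hl0 ht.1
  have hf0 : ∀ t ∈ Ioo (0:ℝ) 1, 0 ≤ f t := by
    intro t ht; rw [hfexp t ht]; exact (exp_pos _).le
  have hfle : ∀ (n : ℕ) (t : ℝ), t ∈ Ioo (0:ℝ) 1 → f t ^ n = exp (n * ((a + 1) * log t + log (1 + l * t) - log (t + l))) := by
    intro n t ht; rw [hfexp t ht, ← Real.exp_nat_mul]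
  have hfen : ∀ (n : ℕ) (t : ℝ), t ∈ Ioo (0:ℝ) 1 → f t ^ n ≤ exp ((n * c) * (t - 1)) := by
    intro n t ht
    rw [hfle n t ht]
    apply exp_le_exp.mpr
    calc (n:ℝ) * ((a + 1) * log t + log (1 + l * t) - log (t + l)) ≤ (n:ℝ) * (c * (t - 1)) :=
          mul_le_mul_of_nonneg_left (hφ t ht) (Nat.cast_nonneg n)
      _ = (n * c) * (t - 1) := by ring
  have hfone : ∀ (n : ℕ) (t : ℝ), t ∈ Ioo (0:ℝ) 1 → f t ^ n ≤ 1 := by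
    intro n t ht
    refine le_trans (hfen n t ht) (exp_le_one_iff.mpr ?_)
    have : t - 1 ≤ 0 := by linarith [ht.2]
    have hnc : 0 ≤ (n:ℝ) * c := by positivity
    nlinarith
  -- integrability
  set Cg : ℝ := (max ((1 + l) ^ β) 1) / l with hCg
  have hCg0 : 0 ≤ Cg := by positivity
  have hgle : ∀ t ∈ Ioo (0:ℝ) 1, g t ≤ Cg * t ^ α := by
    intro t ht
    obtain ⟨hA, hB'⟩ := hpt t ht
    have h1 : (1 + l * t) ^ β ≤ max ((1 + l) ^ β) 1 := by
      rcases le_or_gt 0 β with hb | hb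
      · exact le_trans (rpow_le_rpow (by linarith) (by nlinarith [ht.2]) hb) (le_max_left _ _)
      · exact le_trans (rpow_le_one_of_one_le_of_nonpos (by nlinarith [ht.1]) hb.le) (le_max_right _ _)
    have h3 : (0:ℝ) ≤ t ^ α := rpow_nonneg ht.1.le α
    rw [hg]
    calc (1 + l * t) ^ β * t ^ α / (t + l) ≤ (max ((1 + l) ^ β) 1) * t ^ α / l := by
          gcongr <;> first
          | positivity
          | exact h1
          | linarith [ht.1]
      _ = Cg * t ^ α := by rw [hCg]; ring
  have hrint : IntegrableOn (fun t => Cg * t ^ α) (Ioo (0:ℝ) 1) volume :=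
    ((intervalIntegral.integrableOn_Ioo_rpow_iff one_pos).mpr hα).const_mul Cg
  have hgcont : ContinuousOn g (Ioo (0:ℝ) 1) := by
    rw [hg]
    apply ContinuousOn.div
    · apply ContinuousOn.mul
      · exact (by fun_prop : ContinuousOn (fun t:ℝ => 1 + l * t) (Ioo 0 1)).rpow_const
          fun x hx => Or.inl (hpt x hx).2.ne'
      · exact continuousOn_id.rpow_const fun x hx => Or.inl hx.1.ne'
    · fun_prop
    · exact fun x hx => (hpt x hx).1.ne'
  have hgint : IntegrableOn g (Ioo (0:ℝ) 1) volume := by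
    apply Integrable.mono' hrint (hgcont.aestronglyMeasurable measurableSet_Ioo)
    apply ae_restrict_of_forall_mem measurableSet_Ioo
    intro t ht
    rw [Real.norm_eq_abs, abs_of_nonneg (hgpos t ht)]
    exact hgle t ht
  set A0 : ℝ := ∫ t in Ioo (0:ℝ) 1, g t with hA0
  have hA00 : 0 ≤ A0 := setIntegral_nonneg measurableSet_Ioo hgpos
  set A1 : ℝ := A0 + g1 with hA1
  have hA10 : 0 ≤ A1 := by positivity
  set C : ℝ := 16 * A1 / c ^ 2 + 4 * L / c ^ 2 + 32 * g1 * B / c ^ 3 + 4 * K / c ^ 2 + 1 with hCdef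
  clear_value C m c g1 K B Cg A0 A1
  refine ⟨C, by rw [hCdef]; positivity, ?_⟩
  intro n hn
  have hn1 : (1:ℝ) ≤ n := by exact_mod_cast hn
  have hn0 : (0:ℝ) < n := by linarith
  set ν : ℝ := n * c with hν
  clear_value ν
  have hν0 : 0 < ν := by rw [hν]; positivity
  set mdl : ℝ → ℝ := fun t => g1 * exp (ν * (t - 1)) with hmdl
  set Fn : ℝ → ℝ := fun t => g t * f t ^ n with hFn
  have hgoalfn : (fun t : ℝ => (1 + l * t) ^ β * t ^ α / (t + l)
      * (t ^ (a + 1) * (1 + l * t) / (t + l)) ^ n) = Fn := by rw [hFn, hg, hf]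
  -- rewrite the constant
  have hlac : l * (a + 2) + a = (1 + l) * c := by rw [hc, hm]; field_simp; ring
  have hKn : 1 / (n:ℝ) * (1 + l) ^ β / (l * (a + 2) + a) = K / n := by
    rw [hlac, hK, hg1]; field_simp
  rw [hKn]
  -- integrability for this n
  have hfcont : ContinuousOn f (Ioo (0:ℝ) 1) := by
    rw [hf]
    apply ContinuousOn.div
    · exact (continuousOn_id.rpow_const fun x hx => Or.inl hx.1.ne').mul (by fun_prop)
    · fun_prop
    · exact fun x hx => (hpt x hx).1.ne'
  have hFncont : ContinuousOn Fn (Ioo (0:ℝ) 1) := by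
    rw [hFn]; exact hgcont.mul (hfcont.pow n)
  have hFnint : IntegrableOn Fn (Ioo (0:ℝ) 1) volume := by
    apply Integrable.mono' hrint (hFncont.aestronglyMeasurable measurableSet_Ioo)
    apply ae_restrict_of_forall_mem measurableSet_Ioo
    intro t ht
    have h1 : 0 ≤ Fn t := mul_nonneg (hgpos t ht) (pow_nonneg (hf0 t ht) n)
    rw [Real.norm_eq_abs, abs_of_nonneg h1]
    calc g t * f t ^ n ≤ g t * 1 := mul_le_mul_of_nonneg_left (hfone n t ht) (hgpos t ht)
      _ = g t := mul_one _
      _ ≤ Cg * t ^ α := hgle t ht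
  have hmdlc : Continuous mdl := by
    rw [hmdl]; fun_prop
  have hmdlint01 : IntegrableOn mdl (Ioo (0:ℝ) 1) volume :=
    (hmdlc.integrableOn_Icc (a := 0) (b := 1)).mono_set Ioo_subset_Icc_self
  have hs1 : Ioc (0:ℝ) (1/2) ⊆ Ioo 0 1 := fun x hx => ⟨hx.1, lt_of_le_of_lt hx.2 (by norm_num)⟩
  have hs2 : Ioo (1/2:ℝ) 1 ⊆ Ioo 0 1 := fun x hx => ⟨lt_trans (by norm_num) hx.1, hx.2⟩
  have hsplit : Ioc (0:ℝ) (1/2) ∪ Ioo (1/2) 1 = Ioo 0 1 :=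
    Ioc_union_Ioo_eq_Ioo (by norm_num) (by norm_num)
  have hdisj : Disjoint (Ioc (0:ℝ) (1/2)) (Ioo (1/2:ℝ) 1) := by
    apply Set.disjoint_left.mpr; intro x hx1 hx2; exact absurd hx2.1 (not_lt.mpr hx1.2)
  have hint1 : IntegrableOn (fun t => Fn t - mdl t) (Ioc (0:ℝ) (1/2)) volume :=
    (hFnint.mono_set hs1).sub
      ((hmdlc.integrableOn_Icc (a := 0) (b := 1/2)).mono_set Ioc_subset_Icc_self)
  have hint2 : IntegrableOn (fun t => Fn t - mdl t) (Ioo (1/2:ℝ) 1) volume :=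
    (hFnint.mono_set hs2).sub
      ((hmdlc.integrableOn_Icc (a := 1/2) (b := 1)).mono_set Ioo_subset_Icc_self)
  -- value of the model integral
  have hM : (∫ t in Ioo (0:ℝ) 1, mdl t) = K / n - K * exp (-ν) / n := by
    calc (∫ t in Ioo (0:ℝ) 1, mdl t)
        = g1 * ∫ t in Ioo (0:ℝ) 1, exp (ν * (t - 1)) := by
          rw [hmdl]; exact integral_const_mul g1 _
      _ = g1 * ((exp (ν * (1 - 1)) - exp (ν * (0 - 1))) / ν) := by
          rw [exp_integral hν0 (by norm_num : (0:ℝ) ≤ 1)]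
      _ = K / n - K * exp (-ν) / n := by
          rw [show ν * (1 - 1) = 0 by ring, show ν * (0 - 1) = -ν by ring, Real.exp_zero]
          rw [hK, hν]
          field_simp
  -- piece 1 : (0,1/2]
  have hpt1 : ∀ t ∈ Ioc (0:ℝ) (1/2), ‖Fn t - mdl t‖ ≤ (g t + g1) * exp (-(ν/2)) := by
    intro t ht
    have htI : t ∈ Ioo (0:ℝ) 1 := hs1 ht
    have hprod : 0 ≤ ν * (1/2 - t) := mul_nonneg hν0.le (by linarith [ht.2])
    have hexple : ν * (t - 1) ≤ -(ν/2) := by linarith [hprod, hν0.le]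
    have h1 : f t ^ n ≤ exp (-(ν/2)) := by
      have h1a : f t ^ n ≤ exp (ν * (t - 1)) := by rw [hν]; exact hfen n t htI
      exact le_trans h1a (exp_le_exp.mpr hexple)
    have h2 : exp (ν * (t - 1)) ≤ exp (-(ν/2)) := exp_le_exp.mpr hexple
    have h3 : ‖Fn t - mdl t‖ ≤ g t * f t ^ n + g1 * exp (ν * (t - 1)) := by
      have e1 : |g t * f t ^ n| = g t * f t ^ n :=
        abs_of_nonneg (mul_nonneg (hgpos t htI) (pow_nonneg (hf0 t htI) n))
      have e2 : |g1 * exp (ν * (t - 1))| = g1 * exp (ν * (t - 1)) :=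
        abs_of_nonneg (mul_nonneg hg10.le (exp_pos _).le)
      calc ‖Fn t - mdl t‖ = |g t * f t ^ n - g1 * exp (ν * (t - 1))| := by
            simp only [Real.norm_eq_abs, hFn, hmdl]
        _ ≤ |g t * f t ^ n| + |g1 * exp (ν * (t - 1))| := abs_sub _ _
        _ = g t * f t ^ n + g1 * exp (ν * (t - 1)) := by rw [e1, e2]
    calc ‖Fn t - mdl t‖ ≤ g t * f t ^ n + g1 * exp (ν * (t - 1)) := h3
      _ ≤ g t * exp (-(ν/2)) + g1 * exp (-(ν/2)) :=
          add_le_add (mul_le_mul_of_nonneg_left h1 (hgpos t htI))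
            (mul_le_mul_of_nonneg_left h2 hg10.le)
      _ = (g t + g1) * exp (-(ν/2)) := by ring
  have hP1 : |∫ t in Ioc (0:ℝ) (1/2), (Fn t - mdl t)| ≤ A1 * exp (-(ν/2)) := by
    have hb_int : IntegrableOn (fun t => (g t + g1) * exp (-(ν/2))) (Ioc (0:ℝ) (1/2)) volume := by
      apply Integrable.mul_const
      exact (hgint.mono_set hs1).add (integrableOn_const
        (by rw [Real.volume_Ioc]; exact ENNReal.ofReal_ne_top))
    calc |∫ t in Ioc (0:ℝ) (1/2), (Fn t - mdl t)|
        ≤ ∫ t in Ioc (0:ℝ) (1/2), ‖Fn t - mdl t‖ := by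
          rw [← Real.norm_eq_abs]; exact norm_integral_le_integral_norm _
      _ ≤ ∫ t in Ioc (0:ℝ) (1/2), (g t + g1) * exp (-(ν/2)) :=
          setIntegral_mono_on hint1.norm hb_int measurableSet_Ioc hpt1
      _ = (∫ t in Ioc (0:ℝ) (1/2), (g t + g1)) * exp (-(ν/2)) := integral_mul_const _ _
      _ ≤ A1 * exp (-(ν/2)) := by
          apply mul_le_mul_of_nonneg_right ?_ (exp_pos _).le
          have e1 : (∫ t in Ioc (0:ℝ) (1/2), (g t + g1))
              = (∫ t in Ioc (0:ℝ) (1/2), g t) + (∫ t in Ioc (0:ℝ) (1/2), (g1:ℝ)) := by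
            apply integral_add (hgint.mono_set hs1)
            exact integrableOn_const (by rw [Real.volume_Ioc]; exact ENNReal.ofReal_ne_top)
          have e2 : (∫ t in Ioc (0:ℝ) (1/2), (g1:ℝ)) = g1 * (1/2 : ℝ) := by
            rw [setIntegral_const, Real.volume_real_Ioc_of_le (by norm_num)]
            norm_num [mul_comm]
          have e3 : (∫ t in Ioc (0:ℝ) (1/2), g t) ≤ A0 := by
            rw [hA0]
            apply setIntegral_mono_set hgint
            · exact ae_restrict_of_forall_mem measurableSet_Ioo hgpos
            · exact HasSubset.Subset.eventuallyLE hs1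
          rw [e1, e2, hA1]
          nlinarith
  -- piece 2 : (1/2,1)
  set D : ℝ := L * (2/ν) + g1 * ((n:ℝ) * B) * (16/ν^2) with hD
  clear_value D
  have hD0 : 0 ≤ D := by rw [hD]; positivity
  have hpt2 : ∀ t ∈ Ioo (1/2:ℝ) 1, ‖Fn t - mdl t‖ ≤ D * exp ((ν/2) * (t - 1)) := by
    intro t ht
    have htI : t ∈ Ioo (0:ℝ) 1 := hs2 ht
    have ht2 : t ∈ Icc (1/2:ℝ) 1 := ⟨ht.1.le, htI.2.le⟩
    have hgLt : |g t - g1| ≤ L * (1 - t) := by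
      have h' := hLip t ht2
      rw [Real.one_rpow, mul_one, ← hg1] at h'
      exact h'
    have hfn_le : f t ^ n ≤ exp (ν * (t - 1)) := by
      rw [hν]; exact hfen n t htI
    have hkey3 : c * (t - 1) - ((a + 1) * log t + log (1 + l * t) - log (t + l))
        ≤ B * (1 - t) ^ 2 := by
      have h3 := key3 (l := l) (a := a) hl0 hl1 ha1.le ht.1.le htI.2.le
      rw [← hm, ← hc, ← hB] at h3
      exact h3
    have hdiffexp : exp (ν * (t - 1)) - f t ^ n
        ≤ exp (ν * (t - 1)) * ((n:ℝ) * (B * (1 - t) ^ 2)) := by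
      rw [hfle n t htI]
      have hyx : (n:ℝ) * ((a + 1) * log t + log (1 + l * t) - log (t + l)) ≤ ν * (t - 1) := by
        rw [hν]
        calc (n:ℝ) * ((a + 1) * log t + log (1 + l * t) - log (t + l))
            ≤ (n:ℝ) * (c * (t - 1)) := mul_le_mul_of_nonneg_left (hφ t htI) (Nat.cast_nonneg n)
          _ = (n:ℝ) * c * (t - 1) := by ring
      refine le_trans (exp_diff_le hyx) ?_
      apply mul_le_mul_of_nonneg_left ?_ (exp_pos _).le
      have : ν * (t - 1) - (n:ℝ) * ((a + 1) * log t + log (1 + l * t) - log (t + l))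
          = (n:ℝ) * (c * (t - 1) - ((a + 1) * log t + log (1 + l * t) - log (t + l))) := by
        rw [hν]; ring
      rw [this]
      exact mul_le_mul_of_nonneg_left hkey3 (Nat.cast_nonneg n)
    have hstep1 : ‖Fn t - mdl t‖
        ≤ L * (1 - t) * exp (ν * (t - 1)) + g1 * ((n:ℝ) * (B * (1 - t) ^ 2)) * exp (ν * (t - 1)) := by
      have hid : Fn t - mdl t
          = (g t - g1) * f t ^ n + g1 * (f t ^ n - exp (ν * (t - 1))) := by
        rw [hFn, hmdl]; ring
      rw [Real.norm_eq_abs, hid]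
      refine le_trans (abs_add_le _ _) ?_
      have e1 : |(g t - g1) * f t ^ n| ≤ (L * (1 - t)) * exp (ν * (t - 1)) := by
        rw [abs_mul, abs_of_nonneg (pow_nonneg (hf0 t htI) n)]
        exact mul_le_mul hgLt hfn_le (pow_nonneg (hf0 t htI) n) (mul_nonneg hL0 (by linarith [htI.2]))
      have e2 : |g1 * (f t ^ n - exp (ν * (t - 1)))|
          ≤ g1 * (exp (ν * (t - 1)) * ((n:ℝ) * (B * (1 - t) ^ 2))) := by
        rw [abs_mul, abs_of_nonneg hg10.le]
        have habs : |f t ^ n - exp (ν * (t - 1))| = exp (ν * (t - 1)) - f t ^ n := by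
          rw [abs_of_nonpos (by linarith [hfn_le] : f t ^ n - exp (ν * (t - 1)) ≤ 0)]; ring
        rw [habs]
        apply mul_le_mul_of_nonneg_left ?_ hg10.le
        linarith [hdiffexp]
      calc |(g t - g1) * f t ^ n| + |g1 * (f t ^ n - exp (ν * (t - 1)))|
          ≤ (L * (1 - t)) * exp (ν * (t - 1))
            + g1 * (exp (ν * (t - 1)) * ((n:ℝ) * (B * (1 - t) ^ 2))) := add_le_add e1 e2
        _ = L * (1 - t) * exp (ν * (t - 1))
            + g1 * ((n:ℝ) * (B * (1 - t) ^ 2)) * exp (ν * (t - 1)) := by ring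
    have hconv1 : (1 - t) * exp (ν * (t - 1)) ≤ (2/ν) * exp ((ν/2) * (t - 1)) := by
      have := lin_exp_le hν0 (by linarith [htI.2] : (0:ℝ) ≤ 1 - t)
      rw [show -(ν * (1 - t)) = ν * (t - 1) by ring, show -(ν * (1 - t) / 2) = (ν/2) * (t - 1) by ring] at this
      exact this
    have hconv2 : (1 - t) ^ 2 * exp (ν * (t - 1)) ≤ (16/ν^2) * exp ((ν/2) * (t - 1)) := by
      have := sq_exp_le hν0 (by linarith [htI.2] : (0:ℝ) ≤ 1 - t)
      rw [show -(ν * (1 - t)) = ν * (t - 1) by ring, show -(ν * (1 - t) / 2) = (ν/2) * (t - 1) by ring] at this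
      exact this
    calc ‖Fn t - mdl t‖
        ≤ L * (1 - t) * exp (ν * (t - 1)) + g1 * ((n:ℝ) * (B * (1 - t) ^ 2)) * exp (ν * (t - 1)) := hstep1
      _ = L * ((1 - t) * exp (ν * (t - 1))) + (g1 * (n:ℝ) * B) * ((1 - t) ^ 2 * exp (ν * (t - 1))) := by ring
      _ ≤ L * ((2/ν) * exp ((ν/2) * (t - 1))) + (g1 * (n:ℝ) * B) * ((16/ν^2) * exp ((ν/2) * (t - 1))) := by
          gcongr <;> first
            | exact mul_nonneg (mul_nonneg hg10.le (Nat.cast_nonneg n)) hB0.le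
            | exact hconv1
            | exact hconv2
            | exact hL0
      _ = D * exp ((ν/2) * (t - 1)) := by rw [hD]; ring
  have hP2 : |∫ t in Ioo (1/2:ℝ) 1, (Fn t - mdl t)| ≤ D * (2/ν) := by
    have hb_int : IntegrableOn (fun t => D * exp ((ν/2) * (t - 1))) (Ioo (1/2:ℝ) 1) volume := by
      apply Integrable.const_mul
      exact ((by fun_prop : Continuous fun t : ℝ => exp ((ν/2) * (t - 1))).integrableOn_Icc
        (a := 1/2) (b := 1)).mono_set Ioo_subset_Icc_self
    calc |∫ t in Ioo (1/2:ℝ) 1, (Fn t - mdl t)|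
        ≤ ∫ t in Ioo (1/2:ℝ) 1, ‖Fn t - mdl t‖ := by
          rw [← Real.norm_eq_abs]; exact norm_integral_le_integral_norm _
      _ ≤ ∫ t in Ioo (1/2:ℝ) 1, D * exp ((ν/2) * (t - 1)) :=
          setIntegral_mono_on hint2.norm hb_int measurableSet_Ioo hpt2
      _ = D * ∫ t in Ioo (1/2:ℝ) 1, exp ((ν/2) * (t - 1)) := integral_const_mul _ _
      _ = D * ((exp ((ν/2) * (1 - 1)) - exp ((ν/2) * (1/2 - 1))) / (ν/2)) := by
          rw [exp_integral (by positivity) (by norm_num : (1/2:ℝ) ≤ 1)]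
      _ ≤ D * (2/ν) := by
          apply mul_le_mul_of_nonneg_left ?_ hD0
          rw [show (ν/2) * ((1:ℝ) - 1) = 0 by ring, Real.exp_zero]
          rw [div_le_div_iff₀ (by positivity) (by positivity)]
          have := exp_pos ((ν/2) * ((1:ℝ)/2 - 1))
          nlinarith
  -- assembling
  have hIsplit : (∫ t in Ioo (0:ℝ) 1, Fn t) - (∫ t in Ioo (0:ℝ) 1, mdl t)
      = (∫ t in Ioc (0:ℝ) (1/2), (Fn t - mdl t)) + (∫ t in Ioo (1/2:ℝ) 1, (Fn t - mdl t)) := by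
    rw [← integral_sub hFnint hmdlint01, ← hsplit,
      setIntegral_union hdisj measurableSet_Ioo hint1 hint2]
  have htotal : |(∫ t in Ioo (0:ℝ) 1, Fn t) - K / n|
      ≤ A1 * exp (-(ν/2)) + D * (2/ν) + K * exp (-ν) / n := by
    have hid : (∫ t in Ioo (0:ℝ) 1, Fn t) - K / n
        = ((∫ t in Ioc (0:ℝ) (1/2), (Fn t - mdl t)) + (∫ t in Ioo (1/2:ℝ) 1, (Fn t - mdl t)))
          + ((∫ t in Ioo (0:ℝ) 1, mdl t) - K / n) := by
      rw [← hIsplit]; ring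
    rw [hid]
    refine le_trans (abs_add_le _ _) ?_
    have h1 := le_trans (abs_add_le _ _) (add_le_add hP1 hP2)
    have h2 : |(∫ t in Ioo (0:ℝ) 1, mdl t) - K / n| = K * exp (-ν) / n := by
      rw [hM]
      rw [show K / ↑n - K * exp (-ν) / ↑n - K / ↑n = -(K * exp (-ν) / ↑n) by ring, abs_neg]
      exact abs_of_nonneg (by positivity)
    rw [h2]
    linarith
  -- numeric bounds
  have hb1 : A1 * exp (-(ν/2)) ≤ 16 * A1 / c^2 / (n:ℝ)^2 := by
    have h1 : exp (-(ν/2)) ≤ 4 / (ν/2)^2 := exp_neg_le (by positivity)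
    have h2 : (4:ℝ) / (ν/2)^2 = 16 / ν^2 := by field_simp; ring
    rw [h2] at h1
    calc A1 * exp (-(ν/2)) ≤ A1 * (16 / ν^2) := mul_le_mul_of_nonneg_left h1 hA10
      _ = 16 * A1 / c^2 / (n:ℝ)^2 := by rw [hν]; field_simp
  have hb2 : D * (2/ν) = (4 * L / c^2 + 32 * g1 * B / c^3) / (n:ℝ)^2 := by
    rw [hD, hν]; field_simp; ring
  have hb3 : K * exp (-ν) / n ≤ 4 * K / c^2 / (n:ℝ)^2 := by
    have h1 : exp (-ν) ≤ 4 / ν^2 := exp_neg_le hν0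
    calc K * exp (-ν) / n ≤ K * (4 / ν^2) / n := by
          gcongr <;> first
            | exact h1
            | exact hK0.le
      _ = 4 * K / c^2 / ((n:ℝ)^2 * n) := by rw [hν]; field_simp
      _ ≤ 4 * K / c^2 / (n:ℝ)^2 := by
          have hnum : 0 ≤ 4 * K / c^2 := div_nonneg (by linarith [hK0]) (sq_nonneg c)
          have hden : (n:ℝ)^2 ≤ (n:ℝ)^2 * n := by nlinarith [hn1, hn0]
          have hd2 : (0:ℝ) < (n:ℝ)^2 := by positivity
          exact div_le_div_of_nonneg_left hnum hd2 hden |>.trans_eq rfl |> (fun h => h)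
  have hfinal : |(∫ t in Ioo (0:ℝ) 1, Fn t) - K / n| ≤ C / (n:ℝ)^2 := by
    refine le_trans htotal ?_
    rw [hCdef]
    have h9 : (0:ℝ) < (n:ℝ)^2 := by positivity
    rw [hb2] at *
    have : (16 * A1 / c ^ 2 + 4 * L / c ^ 2 + 32 * g1 * B / c ^ 3 + 4 * K / c ^ 2 + 1) / (n:ℝ)^2
        = 16 * A1 / c^2 / (n:ℝ)^2 + (4 * L / c^2 + 32 * g1 * B / c^3) / (n:ℝ)^2
          + 4 * K / c^2 / (n:ℝ)^2 + 1 / (n:ℝ)^2 := by ring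
    rw [this]
    have h10 : (0:ℝ) ≤ 1 / (n:ℝ)^2 := by positivity
    linarith
  have hrpow : C * (n:ℝ) ^ (-(2:ℝ)) = C / (n:ℝ)^2 := by
    rw [rpow_neg hn0.le, show ((2:ℝ)) = ((2:ℕ):ℝ) by norm_num, rpow_natCast]
    ring
  rw [hrpow]
  exact hfinal
end

section
/- Let λ ∈ (0,1), a > 2λ/(1−λ), and α, β ∈ ℝ. Set y = (a + aλ² + 2λ²)/(2λ(a+1)) and x* = y − √(y² − 1). Then x* ∈ (λ,1), (x*)^{a+1}·(1−λx*)/(x*−λ) ∈ (0,1), and for every positive integer n: | (1/π)·Re( ∫_0^π z^{α+1}(1−λz)^{β}(z−λ)^{−1}·(z^{a+1}(1−λz)/(z−λ))^{n} dφ at z = x*·e^{iφ} ) | ≤ (x*)^{α−a}·ψ_β(λx*)·( (x*)^{a+1}·(1−λx*)/(x*−λ) )^{n+1}, where ψ_β(u) = (1+u)^{β−1} if β ≥ 1 and ψ_β(u) = (1−u)^{β−1} if β < 1. -/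
open Real

/-- `ψ_β(u) = (1+u)^(β-1)` if `β ≥ 1`, and `(1-u)^(β-1)` if `β < 1`. -/
noncomputable def psiAux (β u : ℝ) : ℝ :=
  if 1 ≤ β then (1 + u) ^ (β - 1) else (1 - u) ^ (β - 1)

set_option maxHeartbeats 1000000

private lemma stmt13_aux2 (l a : ℝ) (y xs : ℝ) (hl0 : 0 < l) (hl1 : l < 1) (ha0 : 0 < a)
    (hy2 : 2 * l * (a + 1) * y = a + a * l ^ 2 + 2 * l ^ 2)
    (hxl : l < xs) (hx1 : xs < 1) (hquad : xs ^ 2 - 2 * y * xs + 1 = 0) :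
    xs ^ (a + 1) * (1 - l * xs) / (xs - l) ∈ Set.Ioo (0 : ℝ) 1 := by
  have hxs0 : 0 < xs := lt_trans hl0 hxl
  have hlx : l * xs < 1 := by nlinarith
  have hpos : 0 < xs ^ (a + 1) * (1 - l * xs) / (xs - l) := by
    have := Real.rpow_pos_of_pos hxs0 (a + 1)
    have h1 : 0 < 1 - l * xs := by linarith
    have h2 : 0 < xs - l := by linarith
    positivity
  refine ⟨hpos, ?_⟩
  set g : ℝ → ℝ := fun x => x ^ (a + 1) * (1 - l * x) / (x - l) with hg
  have hmono : StrictMonoOn g (Set.Icc xs 1) := by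
    apply strictMonoOn_of_deriv_pos (convex_Icc xs 1)
    · apply ContinuousOn.div
      · exact (continuousOn_id.rpow_const (fun x _ => Or.inr (by linarith))).mul
          (by fun_prop)
      · fun_prop
      · intro x hx
        intro h; nlinarith [hx.1]
    · intro x hx
      rw [interior_Icc] at hx
      obtain ⟨hx1', hx2'⟩ := hx
      have hx0 : 0 < x := lt_trans hxs0 hx1'
      have hxl' : 0 < x - l := by linarith
      have h1 : HasDerivAt (fun x : ℝ => x ^ (a+1)) ((a+1) * x ^ a) x := by
        have := Real.hasDerivAt_rpow_const (x := x) (p := a + 1) (Or.inl hx0.ne')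
        simpa using this
      have h2 : HasDerivAt (fun x : ℝ => 1 - l * x) (-l) x := by
        simpa using ((hasDerivAt_id x).const_mul l).const_sub 1
      have h4 : HasDerivAt (fun x : ℝ => x - l) 1 x := (hasDerivAt_id x).sub_const l
      have h5 := (h1.mul h2).div h4 hxl'.ne'
      have hxa : x ^ (a+1) = x ^ a * x := by
        rw [Real.rpow_add hx0, Real.rpow_one]
      have hkey : xs * (x^2 - 2*y*x + 1) = (x - xs)*(x*xs - 1) := by
        linear_combination x * hquad
      have hq : x^2 - 2*y*x + 1 < 0 := by
        nlinarith [hkey, mul_pos (sub_pos.2 hx1') (show (0:ℝ) < 1 - x*xs by nlinarith)]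
      have hgd : deriv g x = (((a+1) * x ^ a * (1 - l * x) + x^(a+1) * (-l)) * (x - l)
            - x^(a+1)*(1-l*x) * 1) / (x - l)^2 := by
        rw [hg]; exact h5.deriv
      rw [hgd]
      have hnum : ((a+1) * x ^ a * (1 - l * x) + x^(a+1) * (-l)) * (x - l)
            - x^(a+1)*(1-l*x) * 1 = x ^ a * (-((a+1) * l) * (x^2 - 2*y*x+1)) := by
        rw [hxa]; linear_combination (-(x ^ a * x)) * hy2
      rw [hnum]
      have hP : 0 < x ^ a := Real.rpow_pos_of_pos hx0 a
      have : 0 < -((a+1) * l) * (x^2 - 2*y*x+1) := by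
        have := mul_pos (show (0:ℝ) < (a+1)*l by positivity)
          (show (0:ℝ) < -(x^2 - 2*y*x+1) by linarith)
        nlinarith [this]
      positivity
  have h1g : g 1 = 1 := by
    have h2 : (1:ℝ) - l ≠ 0 := by linarith
    simp only [hg, Real.one_rpow, one_mul, mul_one]
    field_simp
  have := hmono (Set.left_mem_Icc.2 (le_of_lt hx1)) (Set.right_mem_Icc.2 (le_of_lt hx1)) hx1
  rw [h1g] at this
  exact this

private lemma stmt13_aux3 (l a α β xs : ℝ) (hl0 : 0 < l) (hl1 : l < 1) (hxl : l < xs) (hx1 : xs < 1)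
    (n : ℕ) (hn : 0 < n) :
    |(1 / π) *
          (∫ φ in (0 : ℝ)..π,
            (fun z : ℂ => z ^ ((α : ℂ) + 1) * (1 - (l : ℂ) * z) ^ (β : ℂ) / (z - (l : ℂ)) *
                (z ^ ((a : ℂ) + 1) * (1 - (l : ℂ) * z) / (z - (l : ℂ))) ^ n)
              ((xs : ℂ) * Complex.exp (Complex.I * (φ : ℂ)))).re|
        ≤ xs ^ (α - a) * psiAux β (l * xs) *
            (xs ^ (a + 1) * (1 - l * xs) / (xs - l)) ^ (n + 1) := by
  have hxs0 : 0 < xs := lt_trans hl0 hxl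
  have hlx : l * xs < 1 := by nlinarith
  have hxsl : 0 < xs - l := by linarith
  have h1lx : 0 < 1 - l * xs := by linarith
  have hψ : 0 ≤ psiAux β (l * xs) := by
    unfold psiAux; split_ifs
    · positivity
    · positivity
  set C := xs ^ (α - a) * psiAux β (l * xs) *
      (xs ^ (a + 1) * (1 - l * xs) / (xs - l)) ^ (n + 1) with hC
  have key : ∀ φ : ℝ,
      ‖(fun z : ℂ => z ^ ((α : ℂ) + 1) * (1 - (l : ℂ) * z) ^ (β : ℂ) / (z - (l : ℂ)) *
          (z ^ ((a : ℂ) + 1) * (1 - (l : ℂ) * z) / (z - (l : ℂ))) ^ n)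
        ((xs : ℂ) * Complex.exp (Complex.I * (φ : ℂ)))‖ ≤ C := by
    intro φ
    set z : ℂ := (xs : ℂ) * Complex.exp (Complex.I * (φ : ℂ)) with hzdef
    have hzabs : ‖z‖ = xs := by
      rw [hzdef, norm_mul, Complex.norm_real, Real.norm_eq_abs, Complex.norm_exp]
      simp [abs_of_pos hxs0, Complex.mul_re]
    have hz0 : z ≠ 0 := by
      intro h; rw [h] at hzabs; simp at hzabs; linarith
    have hz2 : z.re ^ 2 + z.im ^ 2 = xs ^ 2 := by
      have := Complex.sq_norm z
      rw [hzabs, Complex.normSq_apply] at this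
      nlinarith [this]
    have hre : z.re ≤ xs := by
      have := Complex.re_le_norm z; rwa [hzabs] at this
    set r : ℝ := ‖1 - (l : ℂ) * z‖ with hrdef
    set d : ℝ := ‖z - (l : ℂ)‖ with hddef
    have hr_ub : r ≤ 1 + l * xs := by
      calc r ≤ ‖(1 : ℂ)‖ + ‖(l : ℂ) * z‖ := norm_sub_le _ _
        _ = 1 + l * xs := by
            rw [norm_one, norm_mul,
              Complex.norm_real, Real.norm_eq_abs, hzabs, abs_of_pos hl0]
    have hr_lb : 1 - l * xs ≤ r := by
      have := norm_sub_norm_le (1 : ℂ) ((l : ℂ) * z)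
      rw [norm_one, norm_mul,
        Complex.norm_real, Real.norm_eq_abs, hzabs, abs_of_pos hl0] at this
      exact this
    have hd_lb : xs - l ≤ d := by
      have := norm_sub_norm_le z ((l : ℂ))
      rw [Complex.norm_real, Real.norm_eq_abs, hzabs,
        abs_of_pos hl0] at this
      exact this
    have hr0 : 0 < r := lt_of_lt_of_le h1lx hr_lb
    have hd0 : 0 < d := lt_of_lt_of_le hxsl hd_lb
    have hlz0 : (1 : ℂ) - (l : ℂ) * z ≠ 0 := by
      intro h; rw [hrdef, h] at hr0; simp at hr0
    have hzl0 : z - (l : ℂ) ≠ 0 := by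
      intro h; rw [hddef, h] at hd0; simp at hd0
    -- squared moduli
    have hr2 : r ^ 2 = 1 - 2 * l * z.re + l ^ 2 * xs ^ 2 := by
      rw [hrdef, Complex.sq_norm, Complex.normSq_apply]
      simp [Complex.sub_re, Complex.sub_im, Complex.mul_re, Complex.mul_im]
      nlinarith [hz2]
    have hd2 : d ^ 2 = xs ^ 2 - 2 * l * z.re + l ^ 2 := by
      rw [hddef, Complex.sq_norm, Complex.normSq_apply]
      simp [Complex.sub_re, Complex.sub_im]
      nlinarith [hz2]
    -- Möbius bound
    have hMob : r * (xs - l) ≤ (1 - l * xs) * d := by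
      have hΔ : 0 ≤ (1 - l * xs) ^ 2 - (xs - l) ^ 2 := by
        nlinarith [mul_nonneg (by nlinarith : (0:ℝ) ≤ 1 - l ^ 2)
          (by nlinarith : (0:ℝ) ≤ 1 - xs ^ 2)]
      have hfac : 0 ≤ 2 * l * (xs - z.re) * ((1 - l * xs) ^ 2 - (xs - l) ^ 2) :=
        mul_nonneg (by nlinarith [hre]) hΔ
      have hid : (1 - l * xs) ^ 2 * (xs ^ 2 - 2 * l * z.re + l ^ 2)
          - (1 - 2 * l * z.re + l ^ 2 * xs ^ 2) * (xs - l) ^ 2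
          = 2 * l * (xs - z.re) * ((1 - l * xs) ^ 2 - (xs - l) ^ 2) := by ring
      have hsq : (r * (xs - l)) ^ 2 ≤ ((1 - l * xs) * d) ^ 2 := by
        rw [mul_pow, mul_pow, hr2, hd2]
        nlinarith [hfac, hid]
      have h1 : 0 ≤ r * (xs - l) := by positivity
      have h2 : 0 ≤ (1 - l * xs) * d := by positivity
      nlinarith [hsq, h1, h2]
    have hfrac : r / d ≤ (1 - l * xs) / (xs - l) := by
      rw [div_le_div_iff₀ hd0 hxsl]
      nlinarith [hMob]
    -- rpow bound
    have hrpow : r ^ (β - 1) ≤ psiAux β (l * xs) := by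
      unfold psiAux; split_ifs with hβ
      · exact Real.rpow_le_rpow hr0.le hr_ub (by linarith)
      · exact Real.rpow_le_rpow_of_nonpos h1lx hr_lb (by linarith)
    -- cpow norms
    have h1 : ‖z ^ ((α : ℂ) + 1)‖ = xs ^ (α + 1) := by
      rw [Complex.norm_cpow_of_ne_zero hz0]
      simp [hzabs]
    have h2 : ‖z ^ ((a : ℂ) + 1)‖ = xs ^ (a + 1) := by
      rw [Complex.norm_cpow_of_ne_zero hz0]
      simp [hzabs]
    have h3 : ‖(1 - (l : ℂ) * z) ^ (β : ℂ)‖ = r ^ (β - 1) * r := by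
      have hcast : (β : ℂ) = ((β - 1 : ℝ) : ℂ) + 1 := by push_cast; ring
      rw [hcast, Complex.cpow_add _ _ hlz0, Complex.cpow_one, norm_mul]
      congr 1
      rw [Complex.norm_cpow_of_ne_zero hlz0]
      simp [← hrdef]
    have hnorm : ‖(fun z : ℂ => z ^ ((α : ℂ) + 1) * (1 - (l : ℂ) * z) ^ (β : ℂ) / (z - (l : ℂ)) *
          (z ^ ((a : ℂ) + 1) * (1 - (l : ℂ) * z) / (z - (l : ℂ))) ^ n) z‖
        = xs ^ (α + 1) * (r ^ (β - 1) * r) / d * (xs ^ (a + 1) * r / d) ^ n := by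
      simp only [norm_mul, norm_div, norm_pow, h1, h2, h3, ← hrdef, ← hddef]
    have hxpow : xs ^ (α - a) * (xs ^ (a + 1)) ^ (n + 1) = xs ^ (α + 1) * (xs ^ (a + 1)) ^ n := by
      rw [← Real.rpow_natCast (xs ^ (a + 1)) (n + 1), ← Real.rpow_natCast (xs ^ (a + 1)) n,
        ← Real.rpow_mul hxs0.le, ← Real.rpow_mul hxs0.le, ← Real.rpow_add hxs0,
        ← Real.rpow_add hxs0]
      congr 1; push_cast; ring
    have hxa1 : 0 < xs ^ (a + 1) := Real.rpow_pos_of_pos hxs0 _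
    have hxα : 0 < xs ^ (α + 1) := Real.rpow_pos_of_pos hxs0 _
    rw [hnorm, hC]
    have hstep : xs ^ (α + 1) * (r ^ (β - 1) * r) / d * (xs ^ (a + 1) * r / d) ^ n
        = xs ^ (α + 1) * (xs ^ (a + 1)) ^ n * (r ^ (β - 1) * (r / d) ^ (n + 1)) := by
      simp only [div_eq_mul_inv, mul_pow, pow_succ]
      ring
    rw [hstep]
    have hstep2 : xs ^ (α - a) * psiAux β (l * xs) *
        (xs ^ (a + 1) * (1 - l * xs) / (xs - l)) ^ (n + 1)
        = xs ^ (α + 1) * (xs ^ (a + 1)) ^ n *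
          (psiAux β (l * xs) * ((1 - l * xs) / (xs - l)) ^ (n + 1)) := by
      have e1 : (xs ^ (a + 1) * (1 - l * xs) / (xs - l)) ^ (n + 1)
          = (xs ^ (a + 1)) ^ (n + 1) * ((1 - l * xs) / (xs - l)) ^ (n + 1) := by
        rw [mul_div_assoc, mul_pow]
      rw [e1]
      linear_combination (psiAux β (l * xs) * ((1 - l * xs) / (xs - l)) ^ (n + 1)) * hxpow
    rw [hstep2]
    apply mul_le_mul_of_nonneg_left _ (by positivity)
    apply mul_le_mul hrpow (pow_le_pow_left₀ (by positivity) hfrac _) (by positivity) hψ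
  have hπ : 0 < π := Real.pi_pos
  have hInt : ‖∫ φ in (0 : ℝ)..π,
      (fun z : ℂ => z ^ ((α : ℂ) + 1) * (1 - (l : ℂ) * z) ^ (β : ℂ) / (z - (l : ℂ)) *
          (z ^ ((a : ℂ) + 1) * (1 - (l : ℂ) * z) / (z - (l : ℂ))) ^ n)
        ((xs : ℂ) * Complex.exp (Complex.I * (φ : ℂ)))‖ ≤ C * |π - 0| :=
    intervalIntegral.norm_integral_le_of_norm_le_const fun φ _ => key φ
  have hre_le : |(∫ φ in (0 : ℝ)..π,
      (fun z : ℂ => z ^ ((α : ℂ) + 1) * (1 - (l : ℂ) * z) ^ (β : ℂ) / (z - (l : ℂ)) *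
          (z ^ ((a : ℂ) + 1) * (1 - (l : ℂ) * z) / (z - (l : ℂ))) ^ n)
        ((xs : ℂ) * Complex.exp (Complex.I * (φ : ℂ)))).re| ≤ C * π := by
    refine le_trans (Complex.abs_re_le_norm _) ?_
    refine le_trans hInt ?_
    rw [sub_zero, abs_of_pos hπ]
  rw [abs_mul, abs_of_pos (by positivity : (0:ℝ) < 1/π)]
  have hfin := mul_le_mul_of_nonneg_left hre_le (show (0:ℝ) ≤ 1/π by positivity)
  have heq : 1/π * (C * π) = C := by field_simp
  linarith [hfin, heq]

theorem stmt13 (l a α β : ℝ) (hl : l ∈ Set.Ioo (0 : ℝ) 1) (ha : a > 2 * l / (1 - l))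
    (y xs : ℝ) (hy : y = (a + a * l ^ 2 + 2 * l ^ 2) / (2 * l * (a + 1)))
    (hxs : xs = y - Real.sqrt (y ^ 2 - 1)) :
    xs ∈ Set.Ioo l 1 ∧
    xs ^ (a + 1) * (1 - l * xs) / (xs - l) ∈ Set.Ioo (0 : ℝ) 1 ∧
    ∀ n : ℕ, 0 < n →
      |(1 / π) *
          (∫ φ in (0 : ℝ)..π,
            (fun z : ℂ => z ^ ((α : ℂ) + 1) * (1 - (l : ℂ) * z) ^ (β : ℂ) / (z - (l : ℂ)) *
                (z ^ ((a : ℂ) + 1) * (1 - (l : ℂ) * z) / (z - (l : ℂ))) ^ n)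
              ((xs : ℂ) * Complex.exp (Complex.I * (φ : ℂ)))).re|
        ≤ xs ^ (α - a) * psiAux β (l * xs) *
            (xs ^ (a + 1) * (1 - l * xs) / (xs - l)) ^ (n + 1) := by
  obtain ⟨hl0, hl1⟩ := hl
  have hl1' : 0 < 1 - l := by linarith
  have ha0 : 0 < a := lt_trans (by positivity) ha
  have haL : 2 * l < a * (1 - l) := by
    rw [gt_iff_lt, div_lt_iff₀ hl1'] at ha; linarith
  have hden : 0 < 2 * l * (a + 1) := by positivity
  have hy2 : 2 * l * (a + 1) * y = a + a * l ^ 2 + 2 * l ^ 2 := by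
    rw [hy]; field_simp
  have hy1 : 1 < y := by nlinarith [sq_nonneg (1 - l), sq_nonneg l]
  have hynn : (0:ℝ) ≤ y ^ 2 - 1 := by nlinarith
  have hsqy : Real.sqrt (y ^ 2 - 1) ^ 2 = y ^ 2 - 1 := Real.sq_sqrt hynn
  have hs_nonneg : 0 ≤ Real.sqrt (y ^ 2 - 1) := Real.sqrt_nonneg _
  have hxl : l < xs := by
    rw [hxs, lt_sub_iff_add_lt, ← lt_sub_iff_add_lt']
    have : Real.sqrt (y ^ 2 - 1) < y - l := by
      rw [Real.sqrt_lt' (by nlinarith)]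
      nlinarith
    linarith
  have hx1 : xs < 1 := by
    rw [hxs, sub_lt_iff_lt_add]
    have : y - 1 < Real.sqrt (y ^ 2 - 1) := by
      rw [show y - 1 < Real.sqrt (y^2-1) ↔ (y-1)^2 < y^2-1 from Real.lt_sqrt (by linarith)]
      nlinarith
    linarith
  have hquad : xs ^ 2 - 2 * y * xs + 1 = 0 := by
    rw [hxs]; nlinarith [hsqy]
  exact ⟨⟨hxl, hx1⟩, stmt13_aux2 l a y xs hl0 hl1 ha0 hy2 hxl hx1 hquad,
    fun n hn => stmt13_aux3 l a α β xs hl0 hl1 hxl hx1 n hn⟩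
end
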